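/- Let H be a matrix over a field F with nα columns (n thick columns of α columns each) such that: (i) rank(H|_S) = (n−k)α for every subset S ⊆ {1, …, n} with |S| = n−k, and (ii) the row space of H contains every row of some nα×nα matrix of repair form with parameters (n, α, β). Then rank(H) ≥ (n−k)α + Σ_{j=n−k+1}^{n} max(α − (j−1)β, 0). -/

import Mathlib

open scoped BigOperators
open scoped Matrix

/-- The `(i, j)` block (of size `α × α`) of an `nα × nα` matrix. -/
def blockOf {F : Type*} [Field F] {n a : ℕ}
    (M : Matrix (Fin n × Fin a) (Fin n × Fin a) F) (i j : Fin n) :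
    Matrix (Fin a) (Fin a) F :=
  Matrix.of fun x y => M (i, x) (j, y)

/-- An `nα × nα` matrix is of repair form with parameters `(n, α, β)` if its diagonal
blocks are the identity and its off-diagonal blocks have rank at most `β`. -/
def IsRepairForm {F : Type*} [Field F] (n a b : ℕ)
    (M : Matrix (Fin n × Fin a) (Fin n × Fin a) F) : Prop :=
  (∀ i, blockOf M i i = 1) ∧ (∀ i j, i ≠ j → (blockOf M i j).rank ≤ b)

open Module

/-- Key dimension-counting lemma: if `V ≤ V'`, `π` maps `V'` onto all of `W`, and the
image of `V` has dimension at most `c`, then `dim V' ≥ dim V + (dim W - c)`. -/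
lemma key_dim {F U W : Type*} [Field F] [AddCommGroup U] [Module F U]
    [AddCommGroup W] [Module F W] [FiniteDimensional F U] [FiniteDimensional F W]
    (π : U →ₗ[F] W) (V V' : Submodule F U) (hVV' : V ≤ V')
    (hsurj : Submodule.map π V' = ⊤) {c : ℕ}
    (hc : finrank F (Submodule.map π V) ≤ c) :
    finrank F V + (finrank F W - c) ≤ finrank F V' := by
  have rn' := LinearMap.finrank_range_add_finrank_ker (π.comp V'.subtype)
  have rn := LinearMap.finrank_range_add_finrank_ker (π.comp V.subtype)
  have hr' : LinearMap.range (π.comp V'.subtype) = Submodule.map π V' := by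
    rw [LinearMap.range_comp, Submodule.range_subtype]
  have hr : LinearMap.range (π.comp V.subtype) = Submodule.map π V := by
    rw [LinearMap.range_comp, Submodule.range_subtype]
  have hk' : LinearMap.ker (π.comp V'.subtype) = Submodule.comap V'.subtype (LinearMap.ker π) :=
    LinearMap.ker_comp _ _
  have hk : LinearMap.ker (π.comp V.subtype) = Submodule.comap V.subtype (LinearMap.ker π) :=
    LinearMap.ker_comp _ _
  have hek : finrank F (Submodule.comap V.subtype (LinearMap.ker π))
      = finrank F (V ⊓ LinearMap.ker π : Submodule F U) := by
    rw [← Submodule.map_comap_subtype]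
    exact (Submodule.equivMapOfInjective V.subtype (Submodule.injective_subtype V)
      _).finrank_eq
  have hek' : finrank F (Submodule.comap V'.subtype (LinearMap.ker π))
      = finrank F (V' ⊓ LinearMap.ker π : Submodule F U) := by
    rw [← Submodule.map_comap_subtype]
    exact (Submodule.equivMapOfInjective V'.subtype (Submodule.injective_subtype V')
      _).finrank_eq
  rw [hr', hk', hek', hsurj, finrank_top] at rn'
  rw [hr, hk, hek] at rn
  have hker : finrank F (V ⊓ LinearMap.ker π : Submodule F U)
      ≤ finrank F (V' ⊓ LinearMap.ker π : Submodule F U) :=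
    Submodule.finrank_mono (inf_le_inf_right _ hVV')
  have hmono : finrank F V ≤ finrank F V' := Submodule.finrank_mono hVV'
  have hmW : finrank F (Submodule.map π V) ≤ finrank F W := (Submodule.map π V).finrank_le
  omega

/-- The dimension of a finite supremum of submodules is at most the sum of dimensions. -/
lemma finrank_finset_sup_le_sum {F U γ : Type*} [Field F] [AddCommGroup U] [Module F U]
    [FiniteDimensional F U] [DecidableEq γ] (s : Finset γ) (W : γ → Submodule F U) :
    finrank F (s.sup W : Submodule F U) ≤ ∑ i ∈ s, finrank F (W i) := by
  classical
  induction s using Finset.induction with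
  | empty => simp
  | insert _ _ h ih =>
      rw [Finset.sup_insert, Finset.sum_insert h]
      exact (Submodule.finrank_add_le_finrank_add_finrank _ _).trans (by omega)

/-- if every `(n-k)`-subset of thick columns of `H` has rank `(n-k)α`, and
the row space of `H` contains all rows of some matrix of repair form, then
`rank H ≥ (n-k)α + ∑_{j=n-k+1}^{n} max(α - (j-1)β, 0)`. -/
theorem stmt5 (F : Type*) [Field F] (n k a b : ℕ)
    (hk1 : 1 ≤ k) (hk2 : k ≤ n - 1) (ha : 1 ≤ a) (hb : 1 ≤ b)
    (ι : Type*) [Fintype ι] (H : Matrix ι (Fin n × Fin a) F)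
    (h1 : ∀ S : Finset (Fin n), S.card = n - k →
      (H.submatrix id
          (fun p : {p : Fin n × Fin a // p.1 ∈ S} => (p : Fin n × Fin a))).rank
        = (n - k) * a)
    (h2 : ∃ M : Matrix (Fin n × Fin a) (Fin n × Fin a) F, IsRepairForm n a b M ∧
      ∀ r : Fin n × Fin a,
        (M r : (Fin n × Fin a) → F) ∈
          Submodule.span F (Set.range (fun i => (H i : (Fin n × Fin a) → F)))) :
    (n - k) * a + ∑ j ∈ Finset.Icc (n - k + 1) n, (a - (j - 1) * b) ≤ H.rank := by
  classical
  obtain ⟨M, ⟨hMdiag, hMoff⟩, hMrow⟩ := h2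
  have hkn : k < n := by omega
  set A : Matrix (ι ⊕ Fin n × Fin a) (Fin n × Fin a) F := Matrix.fromRows H M with hA
  -- the rank of the stacked matrix is at most that of H
  have hAH : A.rank ≤ H.rank := by
    rw [Matrix.rank_eq_finrank_span_row, Matrix.rank_eq_finrank_span_row]
    apply Submodule.finrank_mono
    rw [Submodule.span_le]
    rintro f ⟨r, rfl⟩
    cases r with
    | inl i => exact Submodule.subset_span ⟨i, rfl⟩
    | inr p => exact hMrow p
  -- column spans
  set col : (Fin n × Fin a) → ((ι ⊕ Fin n × Fin a) → F) := fun p r => A r p with hcol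
  set V : ℕ → Submodule F ((ι ⊕ Fin n × Fin a) → F) :=
    fun j => Submodule.span F (col '' {p | (p.1 : ℕ) < j}) with hV
  have hVmono : ∀ i j : ℕ, i ≤ j → V i ≤ V j := by
    intro i j hij
    exact Submodule.span_mono (Set.image_mono (fun p hp => lt_of_lt_of_le hp hij))
  -- base claim: the first n-k thick columns already span dimension (n-k)a
  set S : Finset (Fin n) := Finset.univ.filter (fun i : Fin n => (i : ℕ) < n - k) with hS
  have hScard : S.card = n - k := by
    rw [← Finset.card_range (n - k)]
    apply Finset.card_bij (fun (i : Fin n) _ => (i : ℕ))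
    · intro i hi
      simp only [hS, Finset.mem_filter] at hi
      simpa using hi.2
    · intro i _ j _ h
      exact Fin.val_injective h
    · intro x hx
      simp only [Finset.mem_range] at hx
      exact ⟨⟨x, by omega⟩, by simp [hS, hx], rfl⟩
  set πι : ((ι ⊕ Fin n × Fin a) → F) →ₗ[F] (ι → F) :=
    LinearMap.funLeft F F Sum.inl with hπι
  have hbase : (n - k) * a ≤ finrank F (V (n - k)) := by
    have h1S := h1 S hScard
    have heq : Submodule.map πι (V (n - k))
        = Submodule.span F (Set.range (H.submatrix id
            (fun p : {p : Fin n × Fin a // p.1 ∈ S} => (p : Fin n × Fin a)))ᵀ) := by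
      rw [hV, Submodule.map_span, ← Set.image_comp]
      congr 1
      ext f
      constructor
      · rintro ⟨p, hp, rfl⟩
        refine ⟨⟨p, by simp [hS]; exact hp⟩, ?_⟩
        funext i
        rfl
      · rintro ⟨⟨p, hp⟩, rfl⟩
        refine ⟨p, by simpa [hS] using hp, ?_⟩
        funext i
        rfl
    calc (n - k) * a
        = finrank F (Submodule.map πι (V (n - k))) := by
          rw [heq]
          exact h1S.symm.trans (Matrix.rank_eq_finrank_span_cols _)
      _ ≤ finrank F (V (n - k)) := Submodule.finrank_map_le _ _
  -- inductive step
  have hstep : ∀ j : ℕ, n - k ≤ j → j < n →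
      finrank F (V j) + (a - j * b) ≤ finrank F (V (j + 1)) := by
    intro j _ hjn
    set jf : Fin n := ⟨j, hjn⟩ with hjf
    set πj : ((ι ⊕ Fin n × Fin a) → F) →ₗ[F] (Fin a → F) :=
      LinearMap.funLeft F F (fun x : Fin a => Sum.inr (jf, x)) with hπj
    -- surjectivity of πj on V (j+1)
    have hsurj : Submodule.map πj (V (j + 1)) = ⊤ := by
      rw [eq_top_iff]
      intro v _
      have hmem : ∀ y : Fin a,
          (fun x => if y = x then (1 : F) else 0) ∈ Submodule.map πj (V (j + 1)) := by
        intro y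
        refine ⟨col (jf, y), Submodule.subset_span ⟨(jf, y), by simp [hjf], rfl⟩, ?_⟩
        funext x
        have hb1 : M (jf, x) (jf, y) = blockOf M jf jf x y := rfl
        have : blockOf M jf jf x y = if x = y then (1 : F) else 0 := by
          rw [hMdiag jf, Matrix.one_apply]
        simp only [hπj, LinearMap.funLeft_apply]
        show M (jf, x) (jf, y) = if y = x then (1 : F) else 0
        rw [hb1, this]
        simp [eq_comm]
      rw [pi_eq_sum_univ v]
      exact Submodule.sum_mem _ fun y _ => Submodule.smul_mem _ _ (hmem y)
    -- the image of V j under πj has small dimension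
    have himg : finrank F (Submodule.map πj (V j)) ≤ j * b := by
      set T : Finset (Fin n) := Finset.univ.filter (fun i : Fin n => (i : ℕ) < j) with hT
      have hle : Submodule.map πj (V j)
          ≤ T.sup (fun i => Submodule.span F (Set.range (blockOf M jf i)ᵀ)) := by
        rw [hV, Submodule.map_span, Submodule.span_le]
        rintro f ⟨g, ⟨p, hp, rfl⟩, rfl⟩
        have hpT : p.1 ∈ T := by
          simp only [hT, Finset.mem_filter, Finset.mem_univ, true_and]
          exact hp
        refine Finset.le_sup (f := fun i => Submodule.span F (Set.range (blockOf M jf i)ᵀ)) hpT ?_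
        apply Submodule.subset_span
        exact ⟨p.2, by funext x; rfl⟩
      have hcardT : T.card ≤ j := by
        rw [← Finset.card_range j]
        apply Finset.card_le_card_of_injOn (fun i : Fin n => (i : ℕ))
        · intro i hi
          simp only [hT, Finset.mem_filter, Finset.mem_univ, true_and] at hi
          simpa using hi
        · intro i _ j' _ h
          exact Fin.val_injective h
      calc finrank F (Submodule.map πj (V j))
          ≤ finrank F ↥(T.sup fun i => Submodule.span F (Set.range (blockOf M jf i)ᵀ)) :=
            Submodule.finrank_mono hle
        _ ≤ ∑ i ∈ T, finrank F (Submodule.span F (Set.range (blockOf M jf i)ᵀ)) :=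
            finrank_finset_sup_le_sum _ _
        _ ≤ ∑ _i ∈ T, b := by
            apply Finset.sum_le_sum
            intro i hi
            rw [show finrank F (Submodule.span F (Set.range (blockOf M jf i)ᵀ)) = (blockOf M jf i).rank from (Matrix.rank_eq_finrank_span_cols _).symm]
            apply hMoff jf i
            intro h
            simp only [hT, Finset.mem_filter, Finset.mem_univ, true_and] at hi
            rw [← h] at hi
            exact absurd hi (by simp [hjf])
        _ = T.card * b := by rw [Finset.sum_const, smul_eq_mul]
        _ ≤ j * b := Nat.mul_le_mul_right _ hcardT
    have hkey := key_dim πj (V j) (V (j + 1)) (hVmono j (j + 1) (by omega)) hsurj himg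
    have hfa : finrank F (Fin a → F) = a := by
      rw [Module.finrank_pi, Fintype.card_fin]
    rw [hfa] at hkey
    exact hkey
  -- the main induction
  have main : ∀ t : ℕ, t ≤ k →
      (n - k) * a + ∑ i ∈ Finset.Ico (n - k) (n - k + t), (a - i * b)
        ≤ finrank F (V (n - k + t)) := by
    intro t
    induction t with
    | zero => intro _; simpa using hbase
    | succ t ih =>
        intro ht
        have ht' : t ≤ k := by omega
        have ihh := ih ht'
        have hjn : n - k + t < n := by omega
        have hstep' := hstep (n - k + t) (by omega) hjn
        have heq1 : n - k + (t + 1) = (n - k + t) + 1 := by omega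
        rw [heq1, Finset.sum_Ico_succ_top (by omega : n - k ≤ n - k + t)]
        omega
  have hmain := main k le_rfl
  have hnkk : n - k + k = n := by omega
  rw [hnkk] at hmain
  -- V n has finrank at most A.rank
  have hVn : finrank F (V n) ≤ A.rank := by
    rw [Matrix.rank_eq_finrank_span_cols]
    apply Submodule.finrank_mono
    apply Submodule.span_mono
    rintro f ⟨p, _, rfl⟩
    exact ⟨p, rfl⟩
  -- rewrite the sum
  have hsum : ∑ j ∈ Finset.Icc (n - k + 1) n, (a - (j - 1) * b)
      = ∑ i ∈ Finset.Ico (n - k) n, (a - i * b) := by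
    rw [← Finset.Ico_add_one_right_eq_Icc, Finset.sum_Ico_eq_sum_range, Finset.sum_Ico_eq_sum_range]
    have hcc : n + 1 - (n - k + 1) = n - (n - k) := by omega
    rw [hcc]
    apply Finset.sum_congr rfl
    intro r _
    have : n - k + 1 + r - 1 = n - k + r := by omega
    rw [this]
  rw [hsum]
  exact le_trans hmain (le_trans hVn hAH)
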